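/- Let λ ∈ ℝ and h ∈ ℝ, and consider the two-stage RBF Runge–Kutta step with coefficients a₂₁ = c₂ = 2/3, b₁ = 1/4, b₂ = 3/4 and shape parameter e = −λ²/2 applied to f(t,u) = λu: for any v ∈ ℝ set k₁ = λv, k₂ = λ(v·exp(−e(2h/3)²) + (2h/3)k₁) and v_new = v + h((1/4)k₁ + (3/4)k₂). Then v_new = R(λh)·v, where R(z) = 1 + (1/4 + (3/4)·exp((2/9)z²))·z + (1/2)z². Moreover, R(z) − e^z = O(z⁴) as z → 0. -/
import Mathlib


open Real Filter Asymptotics Topology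

/-- Applied to the test problem `u' = λu` with shape parameter `e = −λ²/2`, the
two-stage RBF Runge–Kutta step with `a₂₁ = c₂ = 2/3`, `b₁ = 1/4`, `b₂ = 3/4`
takes the form `v_new = R(λh)·v` with stability function
`R(z) = 1 + (1/4 + (3/4)exp((2/9)z²))z + (1/2)z²`, and `R(z) − e^z = O(z⁴)` as
`z → 0`. -/
theorem stmt_19 (lam h : ℝ) (e : ℝ) (he : e = -lam ^ 2 / 2) (R : ℝ → ℝ)
    (hR : ∀ z : ℝ, R z = 1 + (1 / 4 + (3 / 4) * Real.exp ((2 / 9) * z ^ 2)) * z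
        + (1 / 2) * z ^ 2) :
    (∀ v : ℝ,
        v + h * ((1 / 4) * (lam * v)
          + (3 / 4) * (lam * (v * Real.exp (-e * (2 * h / 3) ^ 2)
              + (2 * h / 3) * (lam * v))))
          = R (lam * h) * v)
    ∧ (fun z : ℝ => R z - Real.exp z) =O[𝓝 (0 : ℝ)] fun z => z ^ 4 := by
  constructor
  · intro v
    rw [hR]
    have harg : -e * (2 * h / 3) ^ 2 = (2 / 9) * (lam * h) ^ 2 := by
      rw [he]; ring
    rw [harg]
    ring
  · rw [isBigO_iff]
    refine ⟨1, ?_⟩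
    filter_upwards [Metric.closedBall_mem_nhds (0 : ℝ) one_pos] with z hz
    rw [Metric.mem_closedBall, Real.dist_eq, sub_zero] at hz
    set w : ℝ := (2 / 9) * z ^ 2 with hw
    have hwabs : |w| ≤ 1 := by
      rw [hw, abs_mul, abs_of_nonneg (by norm_num : (0:ℝ) ≤ (2:ℝ)/9), abs_pow, sq_abs]
      nlinarith [sq_abs z, abs_nonneg z]
    have hA := Real.exp_bound hz (n := 4) (by norm_num)
    have hB := Real.exp_bound hwabs (n := 2) (by norm_num)
    have hsumA : ∑ m ∈ Finset.range 4, z ^ m / (m.factorial : ℝ)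
        = 1 + z + z ^ 2 / 2 + z ^ 3 / 6 := by
      simp [Finset.sum_range_succ, Nat.factorial]
    have hsumB : ∑ m ∈ Finset.range 2, w ^ m / (m.factorial : ℝ) = 1 + w := by
      simp [Finset.sum_range_succ, Nat.factorial]
    rw [hsumA] at hA
    rw [hsumB] at hB
    have hAnum : |Real.exp z - (1 + z + z ^ 2 / 2 + z ^ 3 / 6)| ≤ |z| ^ 4 * (5 / 96) := by
      calc |Real.exp z - (1 + z + z ^ 2 / 2 + z ^ 3 / 6)|
          ≤ |z| ^ 4 * ((4 : ℕ).succ / ((4 : ℕ).factorial * 4)) := hA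
        _ = |z| ^ 4 * (5 / 96) := by norm_num [Nat.factorial]
    have hBnum : |Real.exp w - (1 + w)| ≤ |w| ^ 2 * (3 / 4) := by
      calc |Real.exp w - (1 + w)|
          ≤ |w| ^ 2 * ((2 : ℕ).succ / ((2 : ℕ).factorial * 2)) := hB
        _ = |w| ^ 2 * (3 / 4) := by norm_num [Nat.factorial]
    -- decompose
    have hdecomp : R z - Real.exp z
        = (3 / 4) * z * (Real.exp w - (1 + w))
          - (Real.exp z - (1 + z + z ^ 2 / 2 + z ^ 3 / 6)) := by
      rw [hR, hw]; ring
    have hz4 : |z| ^ 4 = z ^ 4 := by rw [← abs_pow, abs_of_nonneg (by positivity)]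
    have hw2 : |w| ^ 2 = (4 / 81) * z ^ 4 := by
      rw [← abs_pow, abs_of_nonneg (by positivity), hw]; ring
    have hz5 : |z| * z ^ 4 ≤ z ^ 4 := by
      nlinarith [abs_nonneg z, pow_nonneg (abs_nonneg z) 4, hz4]
    rw [Real.norm_eq_abs, Real.norm_eq_abs, hdecomp]
    calc |(3 / 4) * z * (Real.exp w - (1 + w))
          - (Real.exp z - (1 + z + z ^ 2 / 2 + z ^ 3 / 6))|
        ≤ |(3 / 4) * z * (Real.exp w - (1 + w))|
          + |Real.exp z - (1 + z + z ^ 2 / 2 + z ^ 3 / 6)| := abs_sub _ _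
      _ = (3 / 4) * |z| * |Real.exp w - (1 + w)|
          + |Real.exp z - (1 + z + z ^ 2 / 2 + z ^ 3 / 6)| := by
          rw [abs_mul, abs_mul, abs_of_nonneg (by norm_num : (0:ℝ) ≤ (3:ℝ)/4)]
      _ ≤ (3 / 4) * |z| * (|w| ^ 2 * (3 / 4)) + |z| ^ 4 * (5 / 96) := by
          gcongr
      _ = (1 / 36) * (|z| * z ^ 4) + (5 / 96) * z ^ 4 := by
          rw [hw2, hz4]; ring
      _ ≤ (1 / 36) * z ^ 4 + (5 / 96) * z ^ 4 := by gcongr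
      _ ≤ 1 * |z ^ 4| := by
          rw [abs_of_nonneg (by positivity : (0:ℝ) ≤ z ^ 4)]; nlinarith [sq_nonneg (z ^ 2)]
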